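/- Let D be the digraph on vertices {u,v,w,z,x} ∪ A (A possibly empty) whose arcs are exactly those of the 4-cycles (u,v,w,z,u) and (u,v,w,x,u), an arc between x and z (in either one fixed direction), plus u→a and a→w for every a ∈ A. Then D is strongly connected with girth 4 and is not λ'-connected. -/

import Mathlib

/-- A digraph on vertex type `V`, given by its adjacency (arc) relation. -/
structure Digr (V : Type) where
  Adj : V → V → Prop

namespace Digr

variable {V : Type}

/-- Reachability by directed paths. -/
def Reach (D : Digr V) : V → V → Prop := Relation.ReflTransGen D.Adj

/-- A digraph is strongly connected if every vertex reaches every other. -/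
def StronglyConnected (D : Digr V) : Prop := ∀ u v : V, D.Reach u v

/-- An oriented graph: no loops and no pair of opposite arcs. -/
def Oriented (D : Digr V) : Prop := ∀ u v : V, D.Adj u v → ¬ D.Adj v u

/-- The digraph contains at least one arc. -/
def HasArc (D : Digr V) : Prop := ∃ u v : V, D.Adj u v

/-- Delete a set of arcs. -/
def delArcs (D : Digr V) (S : Set (V × V)) : Digr V :=
  ⟨fun a b => D.Adj a b ∧ (a, b) ∉ S⟩

/-- Delete a set of vertices (keep arcs avoiding them). -/
def delVerts (D : Digr V) (X : Set V) : Digr V :=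
  ⟨fun a b => D.Adj a b ∧ a ∉ X ∧ b ∉ X⟩

/-- Induced subdigraph on a vertex set. -/
def induce (D : Digr V) (X : Set V) : Digr V :=
  ⟨fun a b => a ∈ X ∧ b ∈ X ∧ D.Adj a b⟩

/-- The induced subdigraph on `X` is strongly connected. -/
def StronglyConnectedOn (D : Digr V) (X : Set V) : Prop :=
  ∀ u ∈ X, ∀ v ∈ X, (D.induce X).Reach u v

/-- Mutual reachability. -/
def MReach (D : Digr V) (u v : V) : Prop := D.Reach u v ∧ D.Reach v u

/-- `X` is a strong component: an equivalence class of mutual reachability. -/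
def IsStrongComponent (D : Digr V) (X : Set V) : Prop :=
  ∃ x : V, X = {y | D.MReach x y}

/-- `S` is a restricted arc-cut: a set of arcs whose deletion leaves a
non-trivial strong component `X` (containing an arc) such that deleting the
vertices of `X` from `D` leaves an arc. -/
def IsRestrictedArcCut (D : Digr V) (S : Set (V × V)) : Prop :=
  (∀ p ∈ S, D.Adj p.1 p.2) ∧
  ∃ X : Set V, (D.delArcs S).IsStrongComponent X ∧
    (∃ u ∈ X, ∃ v ∈ X, (D.delArcs S).Adj u v) ∧
    (D.delVerts X).HasArc

/-- A digraph is λ'-connected if it admits a restricted arc-cut. -/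
def LambdaPrimeConnected (D : Digr V) : Prop :=
  ∃ S : Set (V × V), D.IsRestrictedArcCut S

/-- λ'(D): minimum size of a restricted arc-cut. -/
noncomputable def lambdaPrime (D : Digr V) [Fintype V] : ℕ :=
  sInf {n : ℕ | ∃ S : Finset (V × V), D.IsRestrictedArcCut ↑S ∧ S.card = n}

/-- λ(D): the arc-connectivity, the minimum size of an arc set whose removal
destroys strong connectivity. -/
noncomputable def lambda (D : Digr V) [Fintype V] : ℕ :=
  sInf {n : ℕ | ∃ S : Finset (V × V), (∀ p ∈ S, D.Adj p.1 p.2) ∧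
    ¬ (D.delArcs ↑S).StronglyConnected ∧ S.card = n}

/-- The list `l` of distinct vertices forms a directed cycle. -/
def IsCycleList (D : Digr V) (l : List V) : Prop :=
  ∃ h : l ≠ [], l.Nodup ∧ l.Chain' D.Adj ∧ D.Adj (l.getLast h) (l.head h)

/-- The girth: minimum length of a directed cycle. -/
noncomputable def girth (D : Digr V) : ℕ :=
  sInf {n : ℕ | ∃ l : List V, D.IsCycleList l ∧ l.length = n}

/-- `(u,v,w,z,u)` is a 4-cycle of `D`. -/
def Cycle4 (D : Digr V) (u v w z : V) : Prop := D.IsCycleList [u, v, w, z]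

/-- Out-degree. -/
def outDeg (D : Digr V) [Fintype V] [DecidableRel D.Adj] (v : V) : ℕ :=
  (Finset.univ.filter fun w => D.Adj v w).card

/-- In-degree. -/
def inDeg (D : Digr V) [Fintype V] [DecidableRel D.Adj] (v : V) : ℕ :=
  (Finset.univ.filter fun w => D.Adj w v).card

/-- ξ(D): minimum over girth cycles `C` of
`min (Σ d⁺ − g, Σ d⁻ − g)`. -/
noncomputable def xi (D : Digr V) [Fintype V] [DecidableRel D.Adj] : ℤ :=
  sInf {k : ℤ | ∃ l : List V, D.IsCycleList l ∧ l.length = D.girth ∧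
    k = min (((l.map D.outDeg).sum : ℤ) - (D.girth : ℤ))
            (((l.map D.inDeg).sum : ℤ) - (D.girth : ℤ))}

/-- ∂⁺(X): the set of arcs from `X` to its complement. -/
noncomputable def outBoundary (D : Digr V) [Fintype V] (X : Set V) : Finset (V × V) :=
  (Set.toFinite {p : V × V | p.1 ∈ X ∧ p.2 ∉ X ∧ D.Adj p.1 p.2}).toFinset

/-- ∂⁻(X): the set of arcs from the complement of `X` into `X`. -/
noncomputable def inBoundary (D : Digr V) [Fintype V] (X : Set V) : Finset (V × V) :=
  (Set.toFinite {p : V × V | p.1 ∉ X ∧ p.2 ∈ X ∧ D.Adj p.1 p.2}).toFinset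

/-- The list of arcs of a cycle given as a vertex list. -/
def cycleArcs (l : List V) : List (V × V) := l.zip (l.rotate 1)

end Digr
/-- A member of the family H₅ (two 4-cycles sharing the path
`u,v,w`, an arc between `x` and `z` in one fixed direction, and vertices `a`
with `u→a→w`) is strongly connected of girth 4 but not λ'-connected. -/
theorem stmt15 {V : Type} (D : Digr V) (u v w z x : V) (A : Set V)
    (hnd : [u, v, w, z, x].Nodup)
    (hA : ∀ a ∈ A, a ∉ ({u, v, w, z, x} : Set V))
    (hcov : ∀ t : V, t ∈ ({u, v, w, z, x} : Set V) ∪ A)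
    (hdir : Xor' (D.Adj x z) (D.Adj z x))
    (hAdj : ∀ p q : V, D.Adj p q ↔
      (p = u ∧ q = v) ∨ (p = v ∧ q = w) ∨ (p = w ∧ q = z) ∨ (p = z ∧ q = u) ∨
      (p = w ∧ q = x) ∨ (p = x ∧ q = u) ∨
      (p = x ∧ q = z ∧ D.Adj x z) ∨ (p = z ∧ q = x ∧ D.Adj z x) ∨
      (p = u ∧ q ∈ A) ∨ (p ∈ A ∧ q = w)) :
    D.StronglyConnected ∧ D.girth = 4 ∧ ¬ D.LambdaPrimeConnected := by
  classical
  have hnd' := hnd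
  simp only [List.nodup_cons, List.mem_cons, List.not_mem_nil, or_false, List.nodup_nil,
    and_true, not_or] at hnd'
  obtain ⟨⟨huv, huw, huz, hux⟩, ⟨hvw, hvz, hvx⟩, ⟨hwz, hwx⟩, hzx, -⟩ := hnd'
  have hAne : ∀ a ∈ A, a ≠ u ∧ a ≠ v ∧ a ≠ w ∧ a ≠ z ∧ a ≠ x := by
    intro a ha
    have := hA a ha
    simp only [Set.mem_insert_iff, Set.mem_singleton_iff, not_or] at this
    exact this
  -- basic arcs
  have auv : D.Adj u v := (hAdj u v).2 (Or.inl ⟨rfl, rfl⟩)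
  have avw : D.Adj v w := (hAdj v w).2 (Or.inr (Or.inl ⟨rfl, rfl⟩))
  have awz : D.Adj w z := (hAdj w z).2 (Or.inr (Or.inr (Or.inl ⟨rfl, rfl⟩)))
  have azu : D.Adj z u := (hAdj z u).2 (Or.inr (Or.inr (Or.inr (Or.inl ⟨rfl, rfl⟩))))
  have awx : D.Adj w x := (hAdj w x).2 (Or.inr (Or.inr (Or.inr (Or.inr (Or.inl ⟨rfl, rfl⟩)))))
  have axu : D.Adj x u := (hAdj x u).2
    (Or.inr (Or.inr (Or.inr (Or.inr (Or.inr (Or.inl ⟨rfl, rfl⟩))))))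
  have auA : ∀ a ∈ A, D.Adj u a := fun a ha => (hAdj u a).2
    (Or.inr (Or.inr (Or.inr (Or.inr (Or.inr (Or.inr (Or.inr (Or.inr (Or.inl ⟨rfl, ha⟩)))))))))
  have aAw : ∀ a ∈ A, D.Adj a w := fun a ha => (hAdj a w).2
    (Or.inr (Or.inr (Or.inr (Or.inr (Or.inr (Or.inr (Or.inr (Or.inr (Or.inr ⟨ha, rfl⟩)))))))))
  -- the code function
  set f : V → ℕ := fun t =>
    if t = u then 0 else if t = v then 1 else if t = w then 2
    else if t = z then 3 else if t = x then 4 else 5 with hf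
  have hfu : f u = 0 := by simp [hf]
  have hfv : f v = 1 := by simp [hf, Ne.symm huv]
  have hfw : f w = 2 := by simp [hf, Ne.symm huw, Ne.symm hvw]
  have hfz : f z = 3 := by simp [hf, Ne.symm huz, Ne.symm hvz, Ne.symm hwz]
  have hfx : f x = 4 := by simp [hf, Ne.symm hux, Ne.symm hvx, Ne.symm hwx, Ne.symm hzx]
  have hfA : ∀ a ∈ A, f a = 5 := by
    intro a ha
    obtain ⟨h1, h2, h3, h4, h5⟩ := hAne a ha
    simp [hf, h1, h2, h3, h4, h5]
  have hcode : ∀ p q : V, D.Adj p q →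
      (f p = 0 ∧ f q = 1) ∨ (f p = 1 ∧ f q = 2) ∨ (f p = 2 ∧ f q = 3) ∨
      (f p = 3 ∧ f q = 0) ∨ (f p = 2 ∧ f q = 4) ∨ (f p = 4 ∧ f q = 0) ∨
      (f p = 4 ∧ f q = 3) ∨ (f p = 3 ∧ f q = 4) ∨ (f p = 0 ∧ f q = 5) ∨
      (f p = 5 ∧ f q = 2) := by
    intro p q h
    rcases (hAdj p q).1 h with ⟨rfl, rfl⟩ | ⟨rfl, rfl⟩ | ⟨rfl, rfl⟩ | ⟨rfl, rfl⟩ |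
      ⟨rfl, rfl⟩ | ⟨rfl, rfl⟩ | ⟨rfl, rfl, -⟩ | ⟨rfl, rfl, -⟩ | ⟨rfl, hq⟩ | ⟨hp, rfl⟩
    · simp [hfu, hfv]
    · simp [hfv, hfw]
    · simp [hfw, hfz]
    · simp [hfz, hfu]
    · simp [hfw, hfx]
    · simp [hfx, hfu]
    · simp [hfx, hfz]
    · simp [hfz, hfx]
    · simp [hfu, hfA _ hq]
    · simp [hfA _ hp, hfw]
  have hinv : ∀ p : V, p = u ∨ p = v ∨ p = w ∨ p = z ∨ p = x ∨ p ∈ A := by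
    intro p
    have := hcov p
    simpa [Set.mem_union, Set.mem_insert_iff, Set.mem_singleton_iff, or_assoc] using this
  have hinvc : ∀ p : V, (f p = 0 → p = u) ∧ (f p = 1 → p = v) ∧ (f p = 2 → p = w) ∧
      (f p = 3 → p = z) ∧ (f p = 4 → p = x) ∧ (f p = 5 → p ∈ A) := by
    intro p
    rcases hinv p with rfl | rfl | rfl | rfl | rfl | hp
    · simp [hfu]
    · simp [hfv]
    · simp [hfw]
    · simp [hfz]
    · simp [hfx]
    · simp [hfA _ hp, hp]
  -- Part 1: strong connectivity
  have rs0 : ∀ {s t : V}, D.Adj s t → D.Reach s t := fun h => Relation.ReflTransGen.single h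
  have hreach_from_u : ∀ t : V, D.Reach u t := by
    intro t
    rcases hinv t with rfl | rfl | rfl | rfl | rfl | ht
    · exact Relation.ReflTransGen.refl
    · exact rs0 auv
    · exact Relation.ReflTransGen.tail (rs0 auv) avw
    · exact Relation.ReflTransGen.tail (Relation.ReflTransGen.tail (rs0 auv) avw) awz
    · exact Relation.ReflTransGen.tail (Relation.ReflTransGen.tail (rs0 auv) avw) awx
    · exact rs0 (auA _ ht)
  have hreach_to_u : ∀ s : V, D.Reach s u := by
    intro s
    rcases hinv s with rfl | rfl | rfl | rfl | rfl | hs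
    · exact Relation.ReflTransGen.refl
    · exact Relation.ReflTransGen.tail (Relation.ReflTransGen.tail (rs0 avw) awz) azu
    · exact Relation.ReflTransGen.tail (rs0 awz) azu
    · exact rs0 azu
    · exact rs0 axu
    · exact Relation.ReflTransGen.tail (Relation.ReflTransGen.tail (rs0 (aAw _ hs)) awz) azu
  have part1 : D.StronglyConnected :=
    fun s t => Relation.ReflTransGen.trans (hreach_to_u s) (hreach_from_u t)
  -- Part 2: girth = 4
  have hxor : ¬ (D.Adj x z ∧ D.Adj z x) := by
    rcases hdir with ⟨-, h⟩ | ⟨-, h⟩ <;> tauto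
  have no_loop : ∀ p : V, ¬ D.Adj p p := by
    intro p h
    have := hcode p p h
    omega
  have no2 : ∀ p q : V, D.Adj p q → D.Adj q p → False := by
    intro p q h1 h2
    have c1 := hcode p q h1
    have c2 := hcode q p h2
    have h34 : (f p = 3 ∧ f q = 4) ∨ (f p = 4 ∧ f q = 3) := by omega
    rcases h34 with ⟨h3, h4⟩ | ⟨h3, h4⟩
    · have hp := (hinvc p).2.2.2.1 h3
      have hq := (hinvc q).2.2.2.2.1 h4
      subst hp; subst hq
      exact hxor ⟨h2, h1⟩
    · have hp := (hinvc p).2.2.2.2.1 h3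
      have hq := (hinvc q).2.2.2.1 h4
      subst hp; subst hq
      exact hxor ⟨h1, h2⟩
  have no3 : ∀ p q r : V, D.Adj p q → D.Adj q r → D.Adj r p → False := by
    intro p q r h1 h2 h3
    have c1 := hcode p q h1
    have c2 := hcode q r h2
    have c3 := hcode r p h3
    omega
  have hmem : 4 ∈ {n : ℕ | ∃ l : List V, D.IsCycleList l ∧ l.length = n} := by
    refine ⟨[u, v, w, z], ⟨by simp, ?_, ?_, ?_⟩, rfl⟩
    · simp [List.nodup_cons, huv, huw, huz, hvw, hvz, hwz]
    · exact List.IsChain.cons_cons auv (List.IsChain.cons_cons avw (List.isChain_pair.2 awz))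
    · simpa using azu
  have part2 : D.girth = 4 := by
    refine le_antisymm (Nat.sInf_le hmem) (le_csInf ⟨4, hmem⟩ ?_)
    rintro n ⟨l, ⟨hne, hnodup, hchain, hlast⟩, rfl⟩
    by_contra hlt
    push_neg at hlt
    rcases l with _ | ⟨p, _ | ⟨q, _ | ⟨r, _ | ⟨s, l'⟩⟩⟩⟩
    · exact hne rfl
    · exact no_loop p (by simpa using hlast)
    · have h1 : D.Adj p q := by simpa [List.Chain', List.isChain_pair] using hchain
      have h2 : D.Adj q p := by simpa using hlast
      exact no2 _ _ h1 h2
    · obtain ⟨h1, h2⟩ : D.Adj p q ∧ D.Adj q r := by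
        simpa [List.Chain', List.isChain_cons_cons] using hchain
      have h3 : D.Adj r p := by simpa using hlast
      exact no3 _ _ _ h1 h2 h3
    · simp at hlt
      omega
  refine ⟨part1, part2, ?_⟩
  rintro ⟨S, -, X, ⟨x₀, rfl⟩, ⟨a, haX, b, hbX, hab⟩, p, q, hpq, hpX, hqX⟩
  have hsub : ∀ {s t : V}, (D.delArcs S).Adj s t → D.Adj s t := fun h => h.1
  have rs : ∀ {s t : V}, (D.delArcs S).Adj s t → (D.delArcs S).Reach s t :=
    fun h => Relation.ReflTransGen.single h
  have rt : ∀ {s t r : V}, (D.delArcs S).Reach s t → (D.delArcs S).Reach t r →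
      (D.delArcs S).Reach s r := fun h1 h2 => Relation.ReflTransGen.trans h1 h2
  have rtl : ∀ {s t r : V}, (D.delArcs S).Reach s t → (D.delArcs S).Adj t r →
      (D.delArcs S).Reach s r := fun h1 h2 => Relation.ReflTransGen.tail h1 h2
  have rr : ∀ {s : V}, (D.delArcs S).Reach s s := fun {s} => Relation.ReflTransGen.refl
  have haX' : (D.delArcs S).MReach x₀ a := haX
  have hbX' : (D.delArcs S).MReach x₀ b := hbX
  have hmemX : ∀ c : V, (D.delArcs S).Reach a c → (D.delArcs S).Reach c a →
      c ∈ {y | (D.delArcs S).MReach x₀ y} :=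
    fun c h1 h2 => ⟨rt haX'.1 h1, rt h2 haX'.2⟩
  have hRba : (D.delArcs S).Reach b a := rt hbX'.2 haX'.1
  -- classification of arcs
  have into_u : ∀ {c : V}, D.Adj c u → c = z ∨ c = x := by
    intro c h
    have hc := hcode c u h
    have h3 : f c = 3 ∨ f c = 4 := by omega
    rcases h3 with h3 | h3
    · exact Or.inl ((hinvc c).2.2.2.1 h3)
    · exact Or.inr ((hinvc c).2.2.2.2.1 h3)
  have into_v : ∀ {c : V}, D.Adj c v → c = u := by
    intro c h
    have hc := hcode c v h
    exact (hinvc c).1 (by omega)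
  have into_w : ∀ {c : V}, D.Adj c w → c = v ∨ c ∈ A := by
    intro c h
    have hc := hcode c w h
    have h3 : f c = 1 ∨ f c = 5 := by omega
    rcases h3 with h3 | h3
    · exact Or.inl ((hinvc c).2.1 h3)
    · exact Or.inr ((hinvc c).2.2.2.2.2 h3)
  have into_z : ∀ {c : V}, D.Adj c z → c = w ∨ c = x := by
    intro c h
    have hc := hcode c z h
    have h3 : f c = 2 ∨ f c = 4 := by omega
    rcases h3 with h3 | h3
    · exact Or.inl ((hinvc c).2.2.1 h3)
    · exact Or.inr ((hinvc c).2.2.2.2.1 h3)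
  have into_x : ∀ {c : V}, D.Adj c x → c = w ∨ c = z := by
    intro c h
    have hc := hcode c x h
    have h3 : f c = 2 ∨ f c = 3 := by omega
    rcases h3 with h3 | h3
    · exact Or.inl ((hinvc c).2.2.1 h3)
    · exact Or.inr ((hinvc c).2.2.2.1 h3)
  have into_A : ∀ α ∈ A, ∀ {c : V}, D.Adj c α → c = u := by
    intro α hα c h
    have hc := hcode c α h
    have h5 := hfA α hα
    exact (hinvc c).1 (by omega)
  have out_v : ∀ {c : V}, D.Adj v c → c = w := by
    intro c h
    have hc := hcode v c h
    exact (hinvc c).2.2.1 (by omega)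
  have out_A : ∀ α ∈ A, ∀ {c : V}, D.Adj α c → c = w := by
    intro α hα c h
    have hc := hcode α c h
    have h5 := hfA α hα
    exact (hinvc c).2.2.1 (by omega)
  -- every nontrivial path into u passes through x or z
  have hLxz : ∀ s : V, (D.delArcs S).Reach s u →
      s = u ∨ ∃ c, (c = x ∨ c = z) ∧ (D.delArcs S).Reach s c ∧ (D.delArcs S).Reach c u := by
    intro s hs
    have hs' : Relation.ReflTransGen (D.delArcs S).Adj s u := hs
    clear hs
    induction hs' using Relation.ReflTransGen.head_induction_on with
    | refl => exact Or.inl rfl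
    | head h' hrest ih =>
      rcases ih with rfl | ⟨d, hd, h1, h2⟩
      · rcases into_u (hsub h') with hc | hc
        · cases hc.symm
          exact Or.inr ⟨z, Or.inr rfl, rr, rs h'⟩
        · cases hc.symm
          exact Or.inr ⟨x, Or.inl rfl, rr, rs h'⟩
      · exact Or.inr ⟨d, hd, Relation.ReflTransGen.head h' h1, h2⟩
  -- every path from s ∉ {v} ∪ A to w passes through u
  have hback_w : ∀ s : V, s ≠ v → s ∉ A → (D.delArcs S).Reach s w →
      s = w ∨ ((D.delArcs S).Reach s u ∧ (D.delArcs S).Reach u w) := by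
    intro s hsv hsA hs
    rcases Relation.ReflTransGen.cases_tail hs with heq | ⟨c, hsc, hcw⟩
    · exact Or.inl heq.symm
    · right
      rcases into_w (hsub hcw) with hcv' | hcA
      · cases hcv'.symm
        rcases Relation.ReflTransGen.cases_tail hsc with heq | ⟨d, hsd, hdv⟩
        · exact absurd heq.symm hsv
        · cases (into_v (hsub hdv)).symm
          exact ⟨hsd, rtl (rs hdv) hcw⟩
      · rcases Relation.ReflTransGen.cases_tail hsc with heq | ⟨d, hsd, hdc⟩
        · exact absurd (heq ▸ hcA) hsA
        · cases (into_A _ hcA (hsub hdc)).symm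
          exact ⟨hsd, rtl (rs hdc) hcw⟩
  -- main case analysis on the arc a → b inside the strong component
  obtain ⟨hu, hw, hxzX⟩ :
      u ∈ {y | (D.delArcs S).MReach x₀ y} ∧ w ∈ {y | (D.delArcs S).MReach x₀ y} ∧
        (x ∈ {y | (D.delArcs S).MReach x₀ y} ∨ z ∈ {y | (D.delArcs S).MReach x₀ y}) := by
    rcases (hAdj a b).1 (hsub hab) with ⟨ha, hb⟩ | ⟨ha, hb⟩ | ⟨ha, hb⟩ | ⟨ha, hb⟩ |
      ⟨ha, hb⟩ | ⟨ha, hb⟩ | ⟨ha, hb, hxz'⟩ | ⟨ha, hb, hzx'⟩ | ⟨ha, hbA⟩ | ⟨haA, hb⟩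
    · -- arc u → v
      cases ha.symm
      cases hb.symm
      rcases Relation.ReflTransGen.cases_head hRba with heq | ⟨c, hvc, hcu⟩
      · exact absurd heq (Ne.symm huv)
      · cases (out_v (hsub hvc)).symm
        have hwX := hmemX w (rtl (rs hab) hvc) hcu
        refine ⟨haX, hwX, ?_⟩
        rcases hLxz w hcu with heq | ⟨d, hd, hwd, hdu⟩
        · exact absurd heq (Ne.symm huw)
        · have hdX := hmemX d (rt (rtl (rs hab) hvc) hwd) hdu
          rcases hd with rfl | rfl
          · exact Or.inl hdX
          · exact Or.inr hdX
    · -- arc v → w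
      cases ha.symm
      cases hb.symm
      rcases Relation.ReflTransGen.cases_tail hRba with heq | ⟨c, hwc, hcv⟩
      · exact absurd heq hvw
      · cases (into_v (hsub hcv)).symm
        have huX := hmemX u (rt (rs hab) hwc) (rs hcv)
        refine ⟨huX, hbX, ?_⟩
        rcases hLxz w hwc with heq | ⟨d, hd, hwd, hdu⟩
        · exact absurd heq (Ne.symm huw)
        · have hdX := hmemX d (rt (rs hab) hwd) (rt hdu (rs hcv))
          rcases hd with rfl | rfl
          · exact Or.inl hdX
          · exact Or.inr hdX
    · -- arc w → z
      cases ha.symm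
      cases hb.symm
      rcases hback_w z (Ne.symm hvz) (fun h => (hAne z h).2.2.2.1 rfl) hRba with heq | ⟨hzu, huw'⟩
      · exact absurd heq (Ne.symm hwz)
      · exact ⟨hmemX u (rt (rs hab) hzu) huw', haX, Or.inr hbX⟩
    · -- arc z → u
      cases ha.symm
      cases hb.symm
      rcases Relation.ReflTransGen.cases_tail hRba with heq | ⟨c, huc, hcz⟩
      · exact absurd heq (Ne.symm huz)
      · rcases into_z (hsub hcz) with hc | hc
        · cases hc.symm
          exact ⟨hbX, hmemX w (rt (rs hab) huc) (rs hcz), Or.inr haX⟩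
        · cases hc.symm
          rcases Relation.ReflTransGen.cases_tail huc with heq | ⟨d, hud, hdx⟩
          · exact absurd heq (Ne.symm hux)
          · rcases into_x (hsub hdx) with hd | hd
            · cases hd.symm
              exact ⟨hbX, hmemX w (rt (rs hab) hud) (rtl (rs hdx) hcz), Or.inr haX⟩
            · cases hd.symm
              exact absurd ⟨hsub hcz, hsub hdx⟩ hxor
    · -- arc w → x
      cases ha.symm
      cases hb.symm
      rcases hback_w x (Ne.symm hvx) (fun h => (hAne x h).2.2.2.2 rfl) hRba with heq | ⟨hxu', huw'⟩
      · exact absurd heq (Ne.symm hwx)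
      · exact ⟨hmemX u (rt (rs hab) hxu') huw', haX, Or.inl hbX⟩
    · -- arc x → u
      cases ha.symm
      cases hb.symm
      rcases Relation.ReflTransGen.cases_tail hRba with heq | ⟨c, huc, hcx⟩
      · exact absurd heq (Ne.symm hux)
      · rcases into_x (hsub hcx) with hc | hc
        · cases hc.symm
          exact ⟨hbX, hmemX w (rt (rs hab) huc) (rs hcx), Or.inl haX⟩
        · cases hc.symm
          rcases Relation.ReflTransGen.cases_tail huc with heq | ⟨d, hud, hdz⟩
          · exact absurd heq (Ne.symm huz)
          · rcases into_z (hsub hdz) with hd | hd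
            · cases hd.symm
              exact ⟨hbX, hmemX w (rt (rs hab) hud) (rtl (rs hdz) hcx), Or.inl haX⟩
            · cases hd.symm
              exact absurd ⟨hsub hdz, hsub hcx⟩ hxor
    · -- arc x → z
      cases ha.symm
      cases hb.symm
      rcases Relation.ReflTransGen.cases_tail hRba with heq | ⟨c, hzc, hcx⟩
      · exact absurd heq (Ne.symm hzx)
      · rcases into_x (hsub hcx) with hc | hc
        · cases hc.symm
          have hwX := hmemX w (rt (rs hab) hzc) (rs hcx)
          rcases hback_w z (Ne.symm hvz) (fun h => (hAne z h).2.2.2.1 rfl) hzc with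
            heq | ⟨hzu, huw'⟩
          · exact absurd heq (Ne.symm hwz)
          · exact ⟨hmemX u (rt (rs hab) hzu) (rtl huw' hcx), hwX, Or.inl haX⟩
        · cases hc.symm
          exact absurd ⟨hxz', hsub hcx⟩ hxor
    · -- arc z → x
      cases ha.symm
      cases hb.symm
      rcases Relation.ReflTransGen.cases_tail hRba with heq | ⟨c, hxc, hcz⟩
      · exact absurd heq hzx
      · rcases into_z (hsub hcz) with hc | hc
        · cases hc.symm
          have hwX := hmemX w (rt (rs hab) hxc) (rs hcz)
          rcases hback_w x (Ne.symm hvx) (fun h => (hAne x h).2.2.2.2 rfl) hxc with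
            heq | ⟨hxu', huw'⟩
          · exact absurd heq (Ne.symm hwx)
          · exact ⟨hmemX u (rt (rs hab) hxu') (rtl huw' hcz), hwX, Or.inr haX⟩
        · cases hc.symm
          exact absurd ⟨hsub hcz, hzx'⟩ hxor
    · -- arc u → b with b ∈ A
      cases ha.symm
      rcases Relation.ReflTransGen.cases_head hRba with heq | ⟨c, hbc, hcu⟩
      · exact absurd heq (hAne b hbA).1
      · cases (out_A b hbA (hsub hbc)).symm
        have hwX := hmemX w (rtl (rs hab) hbc) hcu
        refine ⟨haX, hwX, ?_⟩
        rcases hLxz w hcu with heq | ⟨d, hd, hwd, hdu⟩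
        · exact absurd heq (Ne.symm huw)
        · have hdX := hmemX d (rt (rtl (rs hab) hbc) hwd) hdu
          rcases hd with rfl | rfl
          · exact Or.inl hdX
          · exact Or.inr hdX
    · -- arc a → w with a ∈ A
      cases hb.symm
      rcases Relation.ReflTransGen.cases_tail hRba with heq | ⟨c, hwc, hca⟩
      · exact absurd heq (hAne a haA).2.2.1
      · cases (into_A a haA (hsub hca)).symm
        have huX := hmemX u (rt (rs hab) hwc) (rs hca)
        refine ⟨huX, hbX, ?_⟩
        rcases hLxz w hwc with heq | ⟨d, hd, hwd, hdu⟩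
        · exact absurd heq (Ne.symm huw)
        · have hdX := hmemX d (rt (rs hab) hwd) (rt hdu (rs hca))
          rcases hd with rfl | rfl
          · exact Or.inl hdX
          · exact Or.inr hdX
  -- the remaining arc p → q avoids the component: contradiction
  rcases (hAdj p q).1 hpq with ⟨rfl, -⟩ | ⟨-, rfl⟩ | ⟨rfl, -⟩ | ⟨-, rfl⟩ | ⟨rfl, -⟩ | ⟨-, rfl⟩ |
    ⟨rfl, rfl, -⟩ | ⟨rfl, rfl, -⟩ | ⟨rfl, -⟩ | ⟨-, rfl⟩
  · exact hpX hu
  · exact hqX hw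
  · exact hpX hw
  · exact hqX hu
  · exact hpX hw
  · exact hqX hu
  · rcases hxzX with hx | hz
    · exact hpX hx
    · exact hqX hz
  · rcases hxzX with hx | hz
    · exact hqX hx
    · exact hpX hz
  · exact hpX hu
  · exact hqX hw
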